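/- arXiv:1610.02888 — 2 statements merged into one kernel-verified Lean document; each statement's English description precedes it below -/
import Mathlib

section
/- Let α₁,…,α_d ∈ (0,2], R ≥ 0, γ > 0, z ∈ ℝ, and m(u) := (∏_{i=1}^d u^{2/α_i} · Ψ(u))^{-1} (up to positive constant factors H_i). If u_z = u + (1/u)(−√(R/γ) z + R/(2γ)) + o(1/u) as u → ∞, then m(u)/m(u_z) → exp(−R/(2γ) + √(R/γ)·z) as u → ∞. -/
open Filter Real MeasureTheory Asymptotics

/-- The standard normal tail function. -/
noncomputable def normTail (u : ℝ) : ℝ :=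
  ∫ t in Set.Ioi u, (1 / Real.sqrt (2 * Real.pi)) * Real.exp (-t ^ 2 / 2)

open Topology

noncomputable def gTail (u : ℝ) : ℝ := ∫ t in Set.Ioi u, Real.exp (-t ^ 2 / 2)

lemma normTail_eq (u : ℝ) : normTail u = (1 / Real.sqrt (2 * Real.pi)) * gTail u := by
  rw [normTail, gTail, MeasureTheory.integral_const_mul]

lemma intOn_exp (u : ℝ) : IntegrableOn (fun t : ℝ => Real.exp (-t ^ 2 / 2)) (Set.Ioi u) := by
  have h : Integrable (fun t : ℝ => Real.exp (-(1/2) * t ^ 2)) :=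
    integrable_exp_neg_mul_sq (by norm_num)
  have h2 := h.integrableOn (s := Set.Ioi u)
  convert h2 using 2 with t
  ring_nf

lemma exp_tendsto_zero : Tendsto (fun t : ℝ => Real.exp (-t ^ 2 / 2)) atTop (nhds 0) := by
  apply Real.tendsto_exp_atBot.comp
  have h1 : Tendsto (fun t : ℝ => t ^ 2) atTop atTop := tendsto_pow_atTop two_ne_zero
  have h2 : Tendsto (fun t : ℝ => -t ^ 2) atTop atBot := tendsto_neg_atBot_iff.mpr h1
  exact h2.atBot_div_const two_pos

lemma hderiv1 (x : ℝ) : HasDerivAt (fun t : ℝ => -Real.exp (-t ^ 2 / 2))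
    (x * Real.exp (-x ^ 2 / 2)) x := by
  have h1 : HasDerivAt (fun t : ℝ => -t ^ 2 / 2) (-x) x := by
    have := ((hasDerivAt_pow 2 x).neg.div_const 2)
    refine this.congr_deriv ?_
    push_cast
    ring
  have := h1.exp.neg
  refine this.congr_deriv ?_
  ring

lemma neg_exp_tendsto : Tendsto (fun t : ℝ => -Real.exp (-t ^ 2 / 2)) atTop (nhds 0) := by
  simpa using exp_tendsto_zero.neg

lemma int_t_exp {u : ℝ} (hu : 0 < u) :
    ∫ t in Set.Ioi u, t * Real.exp (-t ^ 2 / 2) = Real.exp (-u ^ 2 / 2) := by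
  have h := integral_Ioi_of_hasDerivAt_of_nonneg
    (g := fun t : ℝ => -Real.exp (-t ^ 2 / 2)) (g' := fun t => t * Real.exp (-t ^ 2 / 2))
    (a := u) (l := 0)
    ((by continuity : Continuous fun t : ℝ => -Real.exp (-t ^ 2 / 2)).continuousWithinAt)
    (fun x hx => hderiv1 x)
    (fun x hx => mul_nonneg (le_of_lt (lt_trans hu hx)) (Real.exp_pos _).le)
    neg_exp_tendsto
  rw [h]; ring

lemma intOn_t_exp {u : ℝ} (hu : 0 < u) :
    IntegrableOn (fun t : ℝ => t * Real.exp (-t ^ 2 / 2)) (Set.Ioi u) :=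
  integrableOn_Ioi_deriv_of_nonneg
    ((by continuity : Continuous fun t : ℝ => -Real.exp (-t ^ 2 / 2)).continuousWithinAt)
    (fun x hx => hderiv1 x)
    (fun x hx => mul_nonneg (le_of_lt (lt_trans hu hx)) (Real.exp_pos _).le)
    neg_exp_tendsto

lemma hderiv2 {x : ℝ} (hx : 0 < x) :
    HasDerivAt (fun t : ℝ => -(Real.exp (-t ^ 2 / 2) / t))
      ((1 + 1 / x ^ 2) * Real.exp (-x ^ 2 / 2)) x := by
  have h1 : HasDerivAt (fun t : ℝ => -t ^ 2 / 2) (-x) x := by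
    have := ((hasDerivAt_pow 2 x).neg.div_const 2)
    refine this.congr_deriv ?_
    push_cast; ring
  have h2 := (h1.exp.div (hasDerivAt_id x) (ne_of_gt hx)).neg
  refine h2.congr_deriv ?_
  simp only [id]
  field_simp
  ring

lemma cont2 {u : ℝ} (hu : 0 < u) :
    ContinuousWithinAt (fun t : ℝ => -(Real.exp (-t ^ 2 / 2) / t)) (Set.Ici u) u := by
  apply ContinuousWithinAt.neg
  apply ContinuousWithinAt.div
  · exact (Real.continuous_exp.comp (by continuity)).continuousWithinAt
  · exact continuousWithinAt_id
  · exact ne_of_gt hu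

lemma tendsto2 : Tendsto (fun t : ℝ => -(Real.exp (-t ^ 2 / 2) / t)) atTop (nhds 0) := by
  have h : Tendsto (fun t : ℝ => Real.exp (-t ^ 2 / 2) / t) atTop (nhds 0) := by
    have := exp_tendsto_zero.mul tendsto_inv_atTop_zero
    simpa [div_eq_mul_inv] using this
  simpa using h.neg

lemma int_exp2 {u : ℝ} (hu : 0 < u) :
    ∫ t in Set.Ioi u, (1 + 1 / t ^ 2) * Real.exp (-t ^ 2 / 2) = Real.exp (-u ^ 2 / 2) / u := by
  have h := integral_Ioi_of_hasDerivAt_of_nonneg (a := u) (l := 0)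
    (cont2 hu) (fun x hx => hderiv2 (lt_trans hu hx))
    (fun x hx => by positivity) tendsto2
  rw [h]; ring

lemma intOn_exp2 {u : ℝ} (hu : 0 < u) :
    IntegrableOn (fun t : ℝ => (1 + 1 / t ^ 2) * Real.exp (-t ^ 2 / 2)) (Set.Ioi u) :=
  integrableOn_Ioi_deriv_of_nonneg (cont2 hu) (fun x hx => hderiv2 (lt_trans hu hx))
    (fun x hx => by positivity) tendsto2

lemma mill_upper {u : ℝ} (hu : 0 < u) : gTail u ≤ Real.exp (-u ^ 2 / 2) / u := by
  have h1 : gTail u ≤ ∫ t in Set.Ioi u, (1 / u) * (t * Real.exp (-t ^ 2 / 2)) := by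
    apply setIntegral_mono_on (intOn_exp u) ((intOn_t_exp hu).const_mul _) measurableSet_Ioi
    intro x hx
    rw [Set.mem_Ioi] at hx
    rw [← mul_assoc]
    nth_rewrite 1 [← one_mul (Real.exp (-x ^ 2 / 2))]
    apply mul_le_mul_of_nonneg_right _ (Real.exp_pos _).le
    rw [div_mul_eq_mul_div, le_div_iff₀ hu]
    linarith
  rw [MeasureTheory.integral_const_mul, int_t_exp hu] at h1
  rw [div_eq_mul_inv, mul_comm]; simpa [div_eq_mul_inv] using h1

lemma mill_lower {u : ℝ} (hu : 0 < u) :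
    Real.exp (-u ^ 2 / 2) / u ≤ (1 + 1 / u ^ 2) * gTail u := by
  have h1 : ∫ t in Set.Ioi u, (1 + 1 / t ^ 2) * Real.exp (-t ^ 2 / 2)
      ≤ ∫ t in Set.Ioi u, (1 + 1 / u ^ 2) * Real.exp (-t ^ 2 / 2) := by
    apply setIntegral_mono_on (intOn_exp2 hu) ((intOn_exp u).const_mul _) measurableSet_Ioi
    intro x hx
    rw [Set.mem_Ioi] at hx
    have hx0 : 0 < x := lt_trans hu hx
    have : 1 / x ^ 2 ≤ 1 / u ^ 2 := by
      apply one_div_le_one_div_of_le (by positivity)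
      nlinarith
    nlinarith [Real.exp_pos (-x ^ 2 / 2)]
  rw [MeasureTheory.integral_const_mul, int_exp2 hu] at h1
  exact h1

lemma gTail_pos {u : ℝ} (hu : 0 < u) : 0 < gTail u := by
  have h1 := mill_lower hu
  have h2 : 0 < Real.exp (-u ^ 2 / 2) / u := by positivity
  nlinarith [sq_nonneg u, one_div_pos.mpr (pow_pos hu 2)]

lemma mill_lower' {v : ℝ} (hv : 0 < v) :
    Real.exp (-v ^ 2 / 2) / (v * (1 + 1 / v ^ 2)) ≤ gTail v := by
  have h := mill_lower hv
  rw [div_le_iff₀ hv] at h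
  rw [div_le_iff₀ (by positivity)]
  calc Real.exp (-v ^ 2 / 2) ≤ (1 + 1 / v ^ 2) * gTail v * v := h
    _ = gTail v * (v * (1 + 1 / v ^ 2)) := by ring

lemma gratio (uz : ℝ → ℝ) (c : ℝ)
    (huz : (fun u => uz u - u - (1 / u) * c) =o[atTop] (fun u => 1 / u)) :
    Tendsto uz atTop atTop ∧
    Tendsto (fun u => uz u / u) atTop (𝓝 1) ∧
    Tendsto (fun u => gTail (uz u) / gTail u) atTop (𝓝 (Real.exp (-c))) := by
  have hinv : Tendsto (fun u : ℝ => 1 / u) atTop (𝓝 0) := by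
    simpa [one_div] using tendsto_inv_atTop_zero (𝕜 := ℝ)
  have hpos : ∀ᶠ u : ℝ in atTop, 0 < u := eventually_gt_atTop 0
  have hA : Tendsto (fun u => u * (uz u - u)) atTop (𝓝 c) := by
    have h0 := huz.tendsto_div_nhds_zero
    have h1 : (fun u => (uz u - u - 1 / u * c) / (1 / u)) =ᶠ[atTop]
        (fun u => u * (uz u - u) - c) := by
      filter_upwards [hpos] with u hu
      field_simp
    have h2 := (h0.congr' h1).add_const c
    simpa using h2
  have hs0 : Tendsto (fun u => uz u - u) atTop (𝓝 0) := by
    have h1 : (fun u => uz u - u) =ᶠ[atTop] (fun u => (u * (uz u - u)) * (1 / u)) := by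
      filter_upwards [hpos] with u hu
      field_simp
    have := hA.mul hinv
    rw [mul_zero] at this
    exact Tendsto.congr' h1.symm this
  have huzTop : Tendsto uz atTop atTop := by
    apply tendsto_atTop_mono' atTop (f₁ := fun u => u + (-1))
    · filter_upwards [hs0.eventually (eventually_gt_nhds (by norm_num : (-1 : ℝ) < 0))] with u hu
      linarith
    · exact tendsto_atTop_add_const_right atTop (-1) tendsto_id
  have huzpos : ∀ᶠ u : ℝ in atTop, 0 < uz u := huzTop.eventually (eventually_gt_atTop 0)
  have hq : Tendsto (fun u => uz u ^ 2 - u ^ 2) atTop (𝓝 (2 * c)) := by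
    have h1 : ∀ u, uz u ^ 2 - u ^ 2 = 2 * (u * (uz u - u)) + (uz u - u) ^ 2 := by
      intro u; ring
    have h2 := ((hA.const_mul 2).add (hs0.pow 2))
    simp only [h1]
    simpa using h2
  have hEr : Tendsto (fun u => Real.exp (-(uz u ^ 2 - u ^ 2) / 2)) atTop (𝓝 (Real.exp (-c))) := by
    have h1 : Tendsto (fun u => -(uz u ^ 2 - u ^ 2) / 2) atTop (𝓝 (-c)) := by
      have := (hq.neg).div_const 2
      convert this using 2
      ring
    exact (Real.continuous_exp.continuousAt.tendsto).comp h1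
  have hr1 : Tendsto (fun u => uz u / u) atTop (𝓝 1) := by
    have h1 : (fun u => uz u / u) =ᶠ[atTop] (fun u => 1 + (uz u - u) * (1 / u)) := by
      filter_upwards [hpos] with u hu
      field_simp
      ring
    have h2 := (hs0.mul hinv).const_add 1
    rw [mul_zero, add_zero] at h2
    exact Tendsto.congr' h1.symm h2
  have hr2 : Tendsto (fun u => u / uz u) atTop (𝓝 1) := by
    have h1 : ∀ u, u / uz u = (uz u / u)⁻¹ := fun u => (inv_div _ _).symm
    simp only [h1]
    simpa using hr1.inv₀ one_ne_zero
  have hinvsq : Tendsto (fun u : ℝ => 1 / u ^ 2) atTop (𝓝 0) := by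
    simpa [one_div, Function.comp_def] using (tendsto_inv_atTop_zero (𝕜 := ℝ)).comp
      (tendsto_pow_atTop (two_ne_zero) (α := ℝ))
  have hinvsqz : Tendsto (fun u => 1 / uz u ^ 2) atTop (𝓝 0) := by
    simpa [one_div, Function.comp_def] using (tendsto_inv_atTop_zero (𝕜 := ℝ)).comp
      ((tendsto_pow_atTop (two_ne_zero) (α := ℝ)).comp huzTop)
  refine ⟨huzTop, hr1, ?_⟩
  set Lb : ℝ → ℝ := fun u =>
    (Real.exp (-uz u ^ 2 / 2) / (uz u * (1 + 1 / uz u ^ 2))) / (Real.exp (-u ^ 2 / 2) / u)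
    with hLb
  set Ub : ℝ → ℝ := fun u =>
    (Real.exp (-uz u ^ 2 / 2) / uz u) / (Real.exp (-u ^ 2 / 2) / (u * (1 + 1 / u ^ 2)))
    with hUb
  have hLlim : Tendsto Lb atTop (𝓝 (Real.exp (-c))) := by
    have heq : Lb =ᶠ[atTop] fun u =>
        Real.exp (-(uz u ^ 2 - u ^ 2) / 2) * ((u / uz u) / (1 + 1 / uz u ^ 2)) := by
      filter_upwards [hpos, huzpos] with u hu huz'
      have h1 : (0:ℝ) < 1 + 1 / uz u ^ 2 := by positivity
      rw [hLb]
      simp only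
      rw [show -(uz u ^ 2 - u ^ 2) / 2 = -uz u ^ 2 / 2 - (-u ^ 2 / 2) by ring, Real.exp_sub]
      field_simp
    have h2 : Tendsto (fun u => (u / uz u) / (1 + 1 / uz u ^ 2)) atTop (𝓝 1) := by
      have := hr2.div (hinvsqz.const_add 1) (by norm_num : (1:ℝ) + 0 ≠ 0)
      simpa [Pi.div_def] using this
    have := hEr.mul h2
    rw [mul_one] at this
    exact Tendsto.congr' heq.symm this
  have hUlim : Tendsto Ub atTop (𝓝 (Real.exp (-c))) := by
    have heq : Ub =ᶠ[atTop] fun u =>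
        Real.exp (-(uz u ^ 2 - u ^ 2) / 2) * ((u / uz u) * (1 + 1 / u ^ 2)) := by
      filter_upwards [hpos, huzpos] with u hu huz'
      have h1 : (0:ℝ) < 1 + 1 / u ^ 2 := by positivity
      rw [hUb]
      simp only
      rw [show -(uz u ^ 2 - u ^ 2) / 2 = -uz u ^ 2 / 2 - (-u ^ 2 / 2) by ring, Real.exp_sub]
      field_simp
    have h2 : Tendsto (fun u => (u / uz u) * (1 + 1 / u ^ 2)) atTop (𝓝 1) := by
      have := hr2.mul (hinvsq.const_add 1)
      simpa using this
    have := hEr.mul h2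
    rw [mul_one] at this
    exact Tendsto.congr' heq.symm this
  apply tendsto_of_tendsto_of_tendsto_of_le_of_le' hLlim hUlim
  · filter_upwards [hpos, huzpos] with u hu huz'
    exact div_le_div₀ (gTail_pos huz').le (mill_lower' huz') (gTail_pos hu) (mill_upper hu)
  · filter_upwards [hpos, huzpos] with u hu huz'
    exact div_le_div₀ (by positivity) (mill_upper huz') (by positivity) (mill_lower' hu)

theorem stmt5 (d : ℕ) (α : Fin d → ℝ) (hα : ∀ i, α i ∈ Set.Ioc (0 : ℝ) 2)
    (R γ z : ℝ) (hR : 0 ≤ R) (hγ : 0 < γ)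
    (uz : ℝ → ℝ)
    (huz : (fun u => uz u - u - (1 / u) * (-(Real.sqrt (R / γ)) * z + R / (2 * γ)))
      =o[atTop] (fun u => 1 / u)) :
    Tendsto (fun u =>
        ((∏ i, (uz u) ^ (2 / α i)) * normTail (uz u)) / ((∏ i, u ^ (2 / α i)) * normTail u))
      atTop (nhds (Real.exp (-R / (2 * γ) + Real.sqrt (R / γ) * z))) := by
  set c : ℝ := -(Real.sqrt (R / γ)) * z + R / (2 * γ) with hc
  obtain ⟨huzTop, hr1, hg⟩ := gratio uz c huz
  have hpos : ∀ᶠ u : ℝ in atTop, 0 < u := eventually_gt_atTop 0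
  have huzpos : ∀ᶠ u : ℝ in atTop, 0 < uz u := huzTop.eventually (eventually_gt_atTop 0)
  have hP : Tendsto (fun u => (∏ i, (uz u) ^ (2 / α i)) / (∏ i, u ^ (2 / α i)))
      atTop (𝓝 1) := by
    have heq : (fun u => (∏ i, (uz u) ^ (2 / α i)) / (∏ i, u ^ (2 / α i))) =ᶠ[atTop]
        (fun u => ∏ i, (uz u / u) ^ (2 / α i)) := by
      filter_upwards [hpos, huzpos] with u hu huz'
      rw [← Finset.prod_div_distrib]
      congr 1
      ext i
      rw [Real.div_rpow huz'.le hu.le]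
    apply Tendsto.congr' heq.symm
    have h1 : Tendsto (fun u => ∏ i, (uz u / u) ^ (2 / α i)) atTop
        (𝓝 (∏ i : Fin d, (1:ℝ) ^ (2 / α i))) := by
      apply tendsto_finset_prod
      intro i _
      exact ((Real.continuousAt_rpow_const 1 (2 / α i) (Or.inl one_ne_zero)).tendsto).comp hr1
    simpa using h1
  have hk : (1 / Real.sqrt (2 * Real.pi)) ≠ 0 := by
    simp [Real.sqrt_eq_zero', Real.pi_pos.le]
  have heq2 : ∀ u, ((∏ i, (uz u) ^ (2 / α i)) * normTail (uz u)) /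
      ((∏ i, u ^ (2 / α i)) * normTail u)
      = ((∏ i, (uz u) ^ (2 / α i)) / (∏ i, u ^ (2 / α i))) * (gTail (uz u) / gTail u) := by
    intro u
    rw [normTail_eq, normTail_eq, mul_div_mul_comm,
      mul_div_mul_left _ _ hk]
  simp only [heq2]
  have := hP.mul hg
  rw [one_mul] at this
  convert this using 2
  rw [hc]
  ring
end

section
/- Let f₁,…,f_d : ℝ → (0,∞) be functions with f_i(u) ≥ ε for all u and some ε > 0, and suppose ∏_i f_i(u) = m(u) where log m(u)/u² → 1/2. Then every sequence u_n → ∞ has a subsequence u_{n_j} such that for each i, either f_i(u_{n_j}) converges to some M_i ∈ [ε,∞), or f_i(u_{n_j}) → ∞ and f_i(u_{n_j}) = exp(γ_i u_{n_j}²)·c_i(u_{n_j}) for some γ_i ∈ [0,1/2] and some positive function c_i with log c_i(u_{n_j}) = o(u_{n_j}²) along the subsequence. -/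
open Filter Real

theorem stmt8 (d : ℕ) (f : Fin d → ℝ → ℝ) (m : ℝ → ℝ) (ε : ℝ) (hε : 0 < ε)
    (hf : ∀ i u, ε ≤ f i u)
    (hprod : ∀ u, ∏ i, f i u = m u)
    (hm : Tendsto (fun u => Real.log (m u) / u ^ 2) atTop (nhds (1 / 2))) :
    ∀ u : ℕ → ℝ, Tendsto u atTop atTop →
      ∃ φ : ℕ → ℕ, StrictMono φ ∧
        ∀ i : Fin d,
          (∃ M : ℝ, M ∈ Set.Ici ε ∧
            Tendsto (fun j => f i (u (φ j))) atTop (nhds M)) ∨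
          (Tendsto (fun j => f i (u (φ j))) atTop atTop ∧
            ∃ γ : ℝ, γ ∈ Set.Icc (0 : ℝ) (1 / 2) ∧
              ∃ c : ℕ → ℝ, (∀ j, 0 < c j) ∧
                (∀ j, f i (u (φ j)) = Real.exp (γ * (u (φ j)) ^ 2) * c j) ∧
                Tendsto (fun j => Real.log (c j) / (u (φ j)) ^ 2) atTop (nhds 0)) := by
  intro u hu
  have hfpos : ∀ i v, 0 < f i v := fun i v => lt_of_lt_of_le hε (hf i v)
  have hmpos : ∀ v, 0 < m v := by
    intro v; rw [← hprod v]; exact Finset.prod_pos fun i _ => hfpos i v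
  set g : Fin d → ℕ → ℝ := fun i j => Real.log (f i (u j)) / (u j) ^ 2 with hgdef
  -- upper bound on log (f i v)
  have hfub : ∀ i v, Real.log (f i v) ≤ Real.log (m v) + (d : ℝ) * |Real.log ε| := by
    intro i v
    have h1 : f i v * ∏ k ∈ Finset.univ.erase i, f k v = m v := by
      rw [← hprod v]
      exact Finset.mul_prod_erase Finset.univ (fun k => f k v) (Finset.mem_univ i)
    have h2 : ε ^ (d - 1) ≤ ∏ k ∈ Finset.univ.erase i, f k v := by
      have := Finset.prod_le_prod (s := Finset.univ.erase i)
        (f := fun _ => ε) (g := fun k => f k v)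
        (fun k _ => hε.le) (fun k _ => hf k v)
      simpa [Finset.prod_const, Finset.card_erase_of_mem, Fintype.card_fin] using this
    have hPpos : 0 < ∏ k ∈ Finset.univ.erase i, f k v :=
      Finset.prod_pos fun k _ => hfpos k v
    have hlogP : ((d - 1 : ℕ) : ℝ) * Real.log ε ≤
        Real.log (∏ k ∈ Finset.univ.erase i, f k v) := by
      have := Real.log_le_log (pow_pos hε (d - 1)) h2
      rwa [Real.log_pow] at this
    have hmeq : Real.log (m v) =
        Real.log (f i v) + Real.log (∏ k ∈ Finset.univ.erase i, f k v) := by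
      rw [← h1, Real.log_mul (hfpos i v).ne' hPpos.ne']
    have hcast : ((d - 1 : ℕ) : ℝ) ≤ (d : ℝ) := Nat.cast_le.2 (Nat.sub_le d 1)
    have hc0 : (0 : ℝ) ≤ ((d - 1 : ℕ) : ℝ) := Nat.cast_nonneg _
    nlinarith [le_abs_self (Real.log ε), neg_abs_le (Real.log ε), abs_nonneg (Real.log ε)]
  -- eventual bound on g
  have h1' : ∀ᶠ v in atTop, Real.log (m v) / v ^ 2 ≤ 1 :=
    hm.eventually (eventually_le_nhds (by norm_num))
  have hev : ∀ᶠ j in atTop, 1 ≤ u j ∧ Real.log (m (u j)) / (u j) ^ 2 ≤ 1 :=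
    (hu.eventually_ge_atTop 1).and (hu.eventually h1')
  -- the sequence in the product space
  set x : ℕ → (Fin d → ℝ × ℝ) :=
    fun j i => (Real.arctan (f i (u j)), g i j) with hxdef
  obtain ⟨R, hRdef⟩ : ∃ R : ℝ, R = π / 2 + 1 + (d : ℝ) * |Real.log ε| := ⟨_, rfl⟩
  have hR0 : (0 : ℝ) ≤ R := by rw [hRdef]; positivity
  have hmem : ∀ᶠ j in atTop, x j ∈ Metric.closedBall (0 : Fin d → ℝ × ℝ) R := by
    filter_upwards [hev] with j hj
    rw [Metric.mem_closedBall, dist_zero_right]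
    rw [pi_norm_le_iff_of_nonneg hR0]
    intro i
    simp only [hxdef, Prod.norm_def]
    have hpi : (0:ℝ) < π := Real.pi_pos
    have hd0 : (0:ℝ) ≤ (d:ℝ) * |Real.log ε| := by positivity
    have hU : (1 : ℝ) ≤ (u j) ^ 2 := by nlinarith [hj.1]
    have hU0 : (0 : ℝ) < (u j) ^ 2 := by linarith
    refine max_le ?_ ?_
    · rw [Real.norm_eq_abs]
      have h1 := Real.arctan_lt_pi_div_two (f i (u j))
      have h2 := Real.neg_pi_div_two_lt_arctan (f i (u j))
      rw [abs_le]
      constructor <;> [linarith; linarith]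
    · rw [Real.norm_eq_abs, abs_le]
      constructor
      · -- lower bound
        have hlow : Real.log ε / (u j) ^ 2 ≤ g i j := by
          have : Real.log ε ≤ Real.log (f i (u j)) := Real.log_le_log hε (hf i (u j))
          simp only [hgdef]
          gcongr
        have habs : -|Real.log ε| ≤ Real.log ε / (u j) ^ 2 := by
          rcases le_or_gt 0 (Real.log ε) with h | h
          · have : (0:ℝ) ≤ Real.log ε / (u j) ^ 2 := by positivity
            linarith [abs_nonneg (Real.log ε)]
          · have h1 : Real.log ε ≤ Real.log ε / (u j) ^ 2 := by
              rw [le_div_iff₀ hU0]; nlinarith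
            rw [abs_of_neg h]; linarith
        have hd : |Real.log ε| ≤ (d:ℝ) * |Real.log ε| ∨ d = 0 := by
          rcases Nat.eq_zero_or_pos d with h | h
          · exact Or.inr h
          · left
            have : (1:ℝ) ≤ (d:ℝ) := by exact_mod_cast h
            nlinarith [abs_nonneg (Real.log ε)]
        rcases hd with hd | hd
        · linarith
        · exact absurd i.2 (by simp [hd])
      · -- upper bound
        have hup : g i j ≤ Real.log (m (u j)) / (u j) ^ 2
            + ((d:ℝ) * |Real.log ε|) / (u j) ^ 2 := by
          simp only [hgdef, ← add_div]
          gcongr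
          exact hfub i (u j)
        have h2 : ((d:ℝ) * |Real.log ε|) / (u j) ^ 2 ≤ (d:ℝ) * |Real.log ε| := by
          apply div_le_self (by positivity) hU
        linarith [hj.2]
  obtain ⟨a, -, φ, hφmono, hconv⟩ :=
    tendsto_subseq_of_frequently_bounded (Metric.isBounded_closedBall
      (x := (0 : Fin d → ℝ × ℝ)) (r := R)) hmem.frequently
  have hcomp : ∀ i, Tendsto (fun j => x (φ j) i) atTop (nhds (a i)) :=
    fun i => ((continuous_apply i).tendsto a).comp hconv
  have hA : ∀ i, Tendsto (fun j => Real.arctan (f i (u (φ j)))) atTop (nhds (a i).1) :=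
    fun i => (continuous_fst.tendsto (a i)).comp (hcomp i)
  have hG : ∀ i, Tendsto (fun j => g i (φ j)) atTop (nhds (a i).2) :=
    fun i => (continuous_snd.tendsto (a i)).comp (hcomp i)
  have huφ : Tendsto (fun j => u (φ j)) atTop atTop := hu.comp hφmono.tendsto_atTop
  have hUinf : Tendsto (fun j => (u (φ j)) ^ 2) atTop atTop :=
    (tendsto_pow_atTop (two_ne_zero)).comp huφ
  have hzero : Tendsto (fun j => Real.log ε / (u (φ j)) ^ 2) atTop (nhds 0) :=
    tendsto_const_nhds.div_atTop hUinf
  have hG0 : ∀ i, 0 ≤ (a i).2 := by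
    intro i
    refine le_of_tendsto_of_tendsto hzero (hG i) ?_
    filter_upwards [huφ.eventually_ge_atTop 1] with j hj
    have hU0 : (0:ℝ) < (u (φ j)) ^ 2 := by nlinarith
    have : Real.log ε ≤ Real.log (f i (u (φ j))) := Real.log_le_log hε (hf i _)
    simp only [hgdef]
    gcongr
  have hSeq : ∀ j, ∑ i, g i (φ j) = Real.log (m (u (φ j))) / (u (φ j)) ^ 2 := by
    intro j
    rw [← hprod, Real.log_prod (fun i _ => (hfpos i _).ne'), Finset.sum_div]
  have hS1 : Tendsto (fun j => ∑ i, g i (φ j)) atTop (nhds (∑ i, (a i).2)) :=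
    tendsto_finset_sum _ fun i _ => hG i
  have hS2 : Tendsto (fun j => ∑ i, g i (φ j)) atTop (nhds (1 / 2)) :=
    (hm.comp huφ).congr fun j => (hSeq j).symm
  have hsum : ∑ i, (a i).2 = 1 / 2 := tendsto_nhds_unique hS1 hS2
  have hGhalf : ∀ i, (a i).2 ≤ 1 / 2 := by
    intro i
    rw [← hsum]
    exact Finset.single_le_sum (fun k _ => hG0 k) (Finset.mem_univ i)
  refine ⟨φ, hφmono, ?_⟩
  intro i
  have hAle : (a i).1 ≤ π / 2 :=
    le_of_tendsto (hA i) (Eventually.of_forall fun j => (Real.arctan_lt_pi_div_two _).le)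
  have hAgt : -(π / 2) < (a i).1 :=
    lt_of_lt_of_le (Real.neg_pi_div_two_lt_arctan ε)
      (ge_of_tendsto (hA i)
        (Eventually.of_forall fun j => Real.arctan_strictMono.monotone (hf i _)))
  rcases eq_or_lt_of_le hAle with hEq | hLt
  · -- f i → ∞ case
    right
    constructor
    · rw [tendsto_atTop]
      intro b
      have hb : Real.arctan b < (a i).1 := by rw [hEq]; exact Real.arctan_lt_pi_div_two b
      filter_upwards [(hA i).eventually (eventually_gt_nhds hb)] with j hj
      exact (Real.arctan_strictMono.lt_iff_lt.mp hj).le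
    · refine ⟨(a i).2, ⟨hG0 i, hGhalf i⟩,
        fun j => f i (u (φ j)) * Real.exp (-((a i).2 * (u (φ j)) ^ 2)), ?_, ?_, ?_⟩
      · intro j; exact mul_pos (hfpos i _) (Real.exp_pos _)
      · intro j
        show f i (u (φ j)) = Real.exp ((a i).2 * (u (φ j)) ^ 2)
          * (f i (u (φ j)) * Real.exp (-((a i).2 * (u (φ j)) ^ 2)))
        rw [Real.exp_neg, mul_comm (f i (u (φ j))), ← mul_assoc,
          mul_inv_cancel₀ (Real.exp_ne_zero _), one_mul]
      · have hlim : Tendsto (fun j => g i (φ j) - (a i).2) atTop (nhds 0) := by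
          have := (hG i).sub_const (a i).2
          simpa using this
        refine Tendsto.congr' ?_ hlim
        filter_upwards [huφ.eventually_ge_atTop 1] with j hj
        have hU0 : (0:ℝ) < (u (φ j)) ^ 2 := by nlinarith
        show g i (φ j) - (a i).2
          = Real.log (f i (u (φ j)) * Real.exp (-((a i).2 * (u (φ j)) ^ 2)))
            / (u (φ j)) ^ 2
        rw [Real.log_mul (hfpos i _).ne' (Real.exp_ne_zero _), Real.log_exp]
        simp only [hgdef]
        field_simp
        ring
  · -- convergent case
    left
    have hcos : Real.cos (a i).1 ≠ 0 :=
      (Real.cos_pos_of_mem_Ioo ⟨hAgt, hLt⟩).ne'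
    have htan : Tendsto (fun j => Real.tan (Real.arctan (f i (u (φ j))))) atTop
        (nhds (Real.tan (a i).1)) :=
      (Real.continuousAt_tan.2 hcos).tendsto.comp (hA i)
    have htan' : Tendsto (fun j => f i (u (φ j))) atTop (nhds (Real.tan (a i).1)) :=
      htan.congr fun j => Real.tan_arctan _
    exact ⟨Real.tan (a i).1,
      ge_of_tendsto htan' (Eventually.of_forall fun j => hf i _), htan'⟩
end
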